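/- Let C > 0, M > 0, σ_a > 0, N > 0, C_k > 0, D_k ≠ 0 be reals, set R_k := D_k²/C_k, and for κ > 0 and m ∈ [0,1) define F(m) := (1−m)·N·R_k·(1 − σ_a⁻²/A*(m)). Then: (i) A*(0) > σ_a⁻² if and only if κ² < κ_c²(C), A*(0) = σ_a⁻² if and only if κ² = κ_c²(C), and A*(0) < σ_a⁻² if and only if κ² > κ_c²(C); (ii) if κ² ≥ κ_c²(C), then F(m) ≤ 0 for every m ∈ [0,1), so m = 0 is the only solution of F(m) = m in [0,1); (iii) if κ² < κ_c²(C), then F(0) > 0, F is strictly decreasing and continuous on [0,1), F(m) → −∞ as m → 1⁻, and there exists a unique m* ∈ (0,1) with F(m*) = m* (a symmetry-breaking phase transition at κ = κ_c). -/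

import Mathlib

open Filter Topology

/-- The critical noise level κ_c²(C). -/
noncomputable def kappaCrit (Ck Dk M σa C : ℝ) : ℝ :=
  (Real.sqrt (Ck ^ 2 + 4 * C * M * Dk ^ 2 * σa⁻¹ ^ 2) - Ck) / (2 * C * σa⁻¹ ^ 2 * M)

/-- A*(m), the unique nonnegative root of
C·κ²·M·A² + C_k·A − (1−m)²·D_k²·σ_a⁻²/κ² = 0. -/
noncomputable def Astar (Ck Dk M σa C κ m : ℝ) : ℝ :=
  (-Ck + Real.sqrt (Ck ^ 2 + 4 * C * M * Dk ^ 2 * σa⁻¹ ^ 2 * (1 - m) ^ 2)) /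
    (2 * C * κ ^ 2 * M)

/-- Strict monotonicity core: `(√(Ck² + B t²) + Ck)/t` is strictly decreasing in `t > 0`. -/
lemma mono_core (Ck B : ℝ) (hCk : 0 < Ck) {t1 t2 : ℝ}
    (h1 : 0 < t1) (h12 : t1 < t2) :
    (Real.sqrt (Ck ^ 2 + B * t2 ^ 2) + Ck) / t2 <
      (Real.sqrt (Ck ^ 2 + B * t1 ^ 2) + Ck) / t1 := by
  have h2 : 0 < t2 := h1.trans h12
  rw [div_lt_div_iff₀ h2 h1]
  have key : t1 * Real.sqrt (Ck ^ 2 + B * t2 ^ 2) ≤ t2 * Real.sqrt (Ck ^ 2 + B * t1 ^ 2) := by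
    have e1 : t1 * Real.sqrt (Ck ^ 2 + B * t2 ^ 2)
        = Real.sqrt (t1 ^ 2 * (Ck ^ 2 + B * t2 ^ 2)) := by
      rw [Real.sqrt_mul (sq_nonneg t1), Real.sqrt_sq h1.le]
    have e2 : t2 * Real.sqrt (Ck ^ 2 + B * t1 ^ 2)
        = Real.sqrt (t2 ^ 2 * (Ck ^ 2 + B * t1 ^ 2)) := by
      rw [Real.sqrt_mul (sq_nonneg t2), Real.sqrt_sq h2.le]
    rw [e1, e2]
    apply Real.sqrt_le_sqrt
    nlinarith [pow_le_pow_left₀ h1.le h12.le 2, sq_nonneg Ck, mul_pos h1 h2]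
  nlinarith [mul_pos hCk (sub_pos.mpr h12)]

/-- The key algebraic identity for `σa⁻² / A*(m)`. -/
lemma key_id (C M σa Ck Dk κ m : ℝ)
    (hC : 0 < C) (hM : 0 < M) (hσa : 0 < σa) (hCk : 0 < Ck)
    (hDk : Dk ≠ 0) (hm : m < 1) :
    σa⁻¹ ^ 2 / Astar Ck Dk M σa C κ m =
      κ ^ 2 * (Real.sqrt (Ck ^ 2 + 4 * C * M * Dk ^ 2 * σa⁻¹ ^ 2 * (1 - m) ^ 2) + Ck) /
        (2 * Dk ^ 2 * (1 - m) ^ 2) := by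
  have h1m : (0:ℝ) < 1 - m := by linarith
  have harg : 0 < 4 * C * M * Dk ^ 2 * σa⁻¹ ^ 2 * (1 - m) ^ 2 := by positivity
  set s := Real.sqrt (Ck ^ 2 + 4 * C * M * Dk ^ 2 * σa⁻¹ ^ 2 * (1 - m) ^ 2) with hs
  have hs2 : s ^ 2 = Ck ^ 2 + 4 * C * M * Dk ^ 2 * σa⁻¹ ^ 2 * (1 - m) ^ 2 :=
    Real.sq_sqrt (by positivity)
  have hsCk : Ck < s := by
    rw [hs]; exact (Real.lt_sqrt hCk.le).mpr (by linarith)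
  have hnum : -Ck + s ≠ 0 := by nlinarith
  rw [Astar, div_div_eq_mul_div, ← hs, div_eq_div_iff hnum (by positivity)]
  have expand : κ ^ 2 * (s + Ck) * (-Ck + s) = κ ^ 2 * s ^ 2 - κ ^ 2 * Ck ^ 2 := by ring
  rw [expand, hs2]; ring

set_option maxHeartbeats 1000000 in
theorem stmt1 (C M σa N Ck Dk κ : ℝ)
    (hC : 0 < C) (hM : 0 < M) (hσa : 0 < σa) (hN : 0 < N) (hCk : 0 < Ck)
    (hDk : Dk ≠ 0) (hκ : 0 < κ)
    (F : ℝ → ℝ)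
    (hF : ∀ m, F m = (1 - m) * N * (Dk ^ 2 / Ck) *
      (1 - σa⁻¹ ^ 2 / Astar Ck Dk M σa C κ m)) :
    -- (i)
    ((σa⁻¹ ^ 2 < Astar Ck Dk M σa C κ 0 ↔ κ ^ 2 < kappaCrit Ck Dk M σa C) ∧
      (Astar Ck Dk M σa C κ 0 = σa⁻¹ ^ 2 ↔ κ ^ 2 = kappaCrit Ck Dk M σa C) ∧
      (Astar Ck Dk M σa C κ 0 < σa⁻¹ ^ 2 ↔ kappaCrit Ck Dk M σa C < κ ^ 2)) ∧
    -- (ii)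
    (kappaCrit Ck Dk M σa C ≤ κ ^ 2 →
      (∀ m ∈ Set.Ico (0 : ℝ) 1, F m ≤ 0) ∧
      (∀ m ∈ Set.Ico (0 : ℝ) 1, F m = m → m = 0)) ∧
    -- (iii)
    (κ ^ 2 < kappaCrit Ck Dk M σa C →
      0 < F 0 ∧ StrictAntiOn F (Set.Ico (0 : ℝ) 1) ∧
      ContinuousOn F (Set.Ico (0 : ℝ) 1) ∧
      Tendsto F (𝓝[<] (1 : ℝ)) atBot ∧
      ∃! m : ℝ, m ∈ Set.Ioo (0 : ℝ) 1 ∧ F m = m) := by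
  have hσi : 0 < σa⁻¹ ^ 2 := by positivity
  have hDk2 : 0 < Dk ^ 2 := by positivity
  -- abbreviation for the sqrt at 0
  set s0 : ℝ := Real.sqrt (Ck ^ 2 + 4 * C * M * Dk ^ 2 * σa⁻¹ ^ 2) with hs0
  have hs0Ck : Ck < s0 := by
    rw [hs0]
    have h4 : 0 < 4 * C * M * Dk ^ 2 * σa⁻¹ ^ 2 := by positivity
    exact (Real.lt_sqrt hCk.le).mpr (by linarith)
  have hX : 0 < s0 - Ck := sub_pos.mpr hs0Ck
  have e0 : Astar Ck Dk M σa C κ 0 = (s0 - Ck) / (2 * C * κ ^ 2 * M) := by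
    rw [Astar, hs0, show Ck ^ 2 + 4 * C * M * Dk ^ 2 * σa⁻¹ ^ 2 * (1 - (0:ℝ)) ^ 2
      = Ck ^ 2 + 4 * C * M * Dk ^ 2 * σa⁻¹ ^ 2 by ring]
    ring
  have ekc : kappaCrit Ck Dk M σa C = (s0 - Ck) / (2 * C * σa⁻¹ ^ 2 * M) := rfl
  have hd1 : 0 < 2 * C * κ ^ 2 * M := by positivity
  have hd2 : 0 < 2 * C * σa⁻¹ ^ 2 * M := by positivity
  -- positivity of Astar for m < 1
  have hsm : ∀ m : ℝ, m < 1 →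
      Ck < Real.sqrt (Ck ^ 2 + 4 * C * M * Dk ^ 2 * σa⁻¹ ^ 2 * (1 - m) ^ 2) := by
    intro m hm
    have h1m : (0:ℝ) < 1 - m := by linarith
    have : 0 < 4 * C * M * Dk ^ 2 * σa⁻¹ ^ 2 * (1 - m) ^ 2 := by positivity
    exact (Real.lt_sqrt hCk.le).mpr (by linarith)
  have hApos : ∀ m : ℝ, m < 1 → 0 < Astar Ck Dk M σa C κ m := by
    intro m hm
    have := hsm m hm
    rw [Astar]
    apply div_pos (by linarith) hd1
  -- part (i)
  have iff1 : σa⁻¹ ^ 2 < Astar Ck Dk M σa C κ 0 ↔ κ ^ 2 < kappaCrit Ck Dk M σa C := by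
    rw [e0, ekc, lt_div_iff₀ hd1, lt_div_iff₀ hd2]
    constructor <;> intro h <;> nlinarith
  have iff2 : Astar Ck Dk M σa C κ 0 = σa⁻¹ ^ 2 ↔ κ ^ 2 = kappaCrit Ck Dk M σa C := by
    rw [e0, ekc, div_eq_iff hd1.ne', eq_div_iff hd2.ne']
    constructor <;> intro h <;> nlinarith
  have iff3 : Astar Ck Dk M σa C κ 0 < σa⁻¹ ^ 2 ↔ kappaCrit Ck Dk M σa C < κ ^ 2 := by
    rw [e0, ekc, div_lt_iff₀ hd1, div_lt_iff₀ hd2]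
    constructor <;> intro h <;> nlinarith
  refine ⟨⟨iff1, iff2, iff3⟩, ?_, ?_⟩
  · -- part (ii)
    intro hle
    have hA0le : Astar Ck Dk M σa C κ 0 ≤ σa⁻¹ ^ 2 := by
      by_contra h
      push_neg at h
      exact absurd (iff1.mp h) (not_lt.mpr hle)
    have hFle : ∀ m ∈ Set.Ico (0:ℝ) 1, F m ≤ 0 := by
      intro m hm
      obtain ⟨hm0, hm1⟩ := hm
      have hAm : Astar Ck Dk M σa C κ m ≤ Astar Ck Dk M σa C κ 0 := by
        rw [Astar, Astar]
        have hsle : Real.sqrt (Ck ^ 2 + 4 * C * M * Dk ^ 2 * σa⁻¹ ^ 2 * (1 - m) ^ 2) ≤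
            Real.sqrt (Ck ^ 2 + 4 * C * M * Dk ^ 2 * σa⁻¹ ^ 2 * (1 - (0:ℝ)) ^ 2) := by
          apply Real.sqrt_le_sqrt
          have h4 : 0 < 4 * C * M * Dk ^ 2 * σa⁻¹ ^ 2 := by positivity
          nlinarith [mul_nonneg (mul_nonneg h4.le hm0) (by linarith : (0:ℝ) ≤ 2 - m)]
        exact div_le_div_of_nonneg_right (by linarith) hd1.le
      have hAmpos := hApos m hm1
      have h1 : 1 ≤ σa⁻¹ ^ 2 / Astar Ck Dk M σa C κ m := by
        rw [le_div_iff₀ hAmpos]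
        nlinarith
      rw [hF]
      have hfac : 0 ≤ (1 - m) * N * (Dk ^ 2 / Ck) := by
        have : (0:ℝ) ≤ 1 - m := by linarith
        positivity
      exact mul_nonpos_of_nonneg_of_nonpos hfac (by linarith)
    refine ⟨hFle, ?_⟩
    intro m hm hfix
    have := hFle m hm
    have := hm.1
    linarith
  · -- part (iii)
    intro hlt
    have hA0 : σa⁻¹ ^ 2 < Astar Ck Dk M σa C κ 0 := iff1.mpr hlt
    have hA0pos := hApos 0 one_pos
    have hF0 : 0 < F 0 := by
      rw [hF]
      have h1 : σa⁻¹ ^ 2 / Astar Ck Dk M σa C κ 0 < 1 := (div_lt_one hA0pos).mpr hA0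
      have h2 : 0 < 1 - σa⁻¹ ^ 2 / Astar Ck Dk M σa C κ 0 := by linarith
      have h3 : (0:ℝ) < (1 - 0) * N * (Dk ^ 2 / Ck) := by
        rw [show ((1:ℝ) - 0) * N * (Dk ^ 2 / Ck) = N * (Dk ^ 2 / Ck) by ring]
        positivity
      exact mul_pos h3 h2
    -- the explicit form of F for m < 1
    have hFG : ∀ m : ℝ, m < 1 → F m =
        N * (Dk ^ 2 / Ck) * (1 - m) -
        N * κ ^ 2 * (Real.sqrt (Ck ^ 2 + 4 * C * M * Dk ^ 2 * σa⁻¹ ^ 2 * (1 - m) ^ 2) + Ck) /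
          (2 * Ck * (1 - m)) := by
      intro m hm
      have h1m : (0:ℝ) < 1 - m := by linarith
      rw [hF, key_id C M σa Ck Dk κ m hC hM hσa hCk hDk hm]
      field_simp
    -- strict antitonicity
    have hanti : StrictAntiOn F (Set.Ico (0:ℝ) 1) := by
      intro a ha b hb hab
      rw [hFG a ha.2, hFG b hb.2]
      have h1b : (0:ℝ) < 1 - b := by linarith [hb.2]
      have h1ab : (1:ℝ) - b < 1 - a := by linarith
      have hmono := mono_core Ck (4 * C * M * Dk ^ 2 * σa⁻¹ ^ 2) hCk h1b h1ab
      have hc : 0 < N * κ ^ 2 / (2 * Ck) := by positivity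
      have h2 := mul_lt_mul_of_pos_left hmono hc
      have ea : ∀ x : ℝ, x ≠ 0 → ∀ y : ℝ,
          N * κ ^ 2 / (2 * Ck) * ((y + Ck) / x) = N * κ ^ 2 * (y + Ck) / (2 * Ck * x) := by
        intro x hx y
        field_simp
      rw [ea _ (by linarith : (1:ℝ)-a ≠ 0) _, ea _ h1b.ne' _] at h2
      have h3 : N * (Dk ^ 2 / Ck) * (1 - b) < N * (Dk ^ 2 / Ck) * (1 - a) := by
        have : 0 < N * (Dk ^ 2 / Ck) := by positivity
        nlinarith
      linarith
    -- continuity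
    have hAcont : Continuous (Astar Ck Dk M σa C κ) := by
      unfold Astar
      exact (continuous_const.add ((Real.continuous_sqrt).comp (by continuity))).div_const _
    have hAne : ∀ m ∈ Set.Ico (0:ℝ) 1, Astar Ck Dk M σa C κ m ≠ 0 :=
      fun m hm => (hApos m hm.2).ne'
    have hcont : ContinuousOn F (Set.Ico (0:ℝ) 1) := by
      apply ContinuousOn.congr (g := F)
        (f := fun m => (1 - m) * N * (Dk ^ 2 / Ck) * (1 - σa⁻¹ ^ 2 / Astar Ck Dk M σa C κ m))
      · apply ContinuousOn.mul
        · exact (by continuity : Continuous fun m : ℝ => (1 - m) * N * (Dk ^ 2 / Ck)).continuousOn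
        · exact continuousOn_const.sub (continuousOn_const.div hAcont.continuousOn hAne)
      · intro m _
        exact hF m
    -- tendsto atBot
    have hsge : ∀ m : ℝ, m < 1 →
        Ck ≤ Real.sqrt (Ck ^ 2 + 4 * C * M * Dk ^ 2 * σa⁻¹ ^ 2 * (1 - m) ^ 2) :=
      fun m hm => (hsm m hm).le
    have htend : Tendsto F (𝓝[<] (1:ℝ)) atBot := by
      have hev : F =ᶠ[𝓝[<] (1:ℝ)] fun m =>
          N * (Dk ^ 2 / Ck) * (1 - m) -
          N * κ ^ 2 * (Real.sqrt (Ck ^ 2 + 4 * C * M * Dk ^ 2 * σa⁻¹ ^ 2 * (1 - m) ^ 2) + Ck) /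
            (2 * Ck * (1 - m)) := by
        filter_upwards [self_mem_nhdsWithin] with m hm
        exact hFG m hm
      have h1 : Tendsto (fun m : ℝ => 1 - m) (𝓝[<] (1:ℝ)) (𝓝[>] (0:ℝ)) := by
        apply tendsto_nhdsWithin_of_tendsto_nhds_of_eventually_within
        · have hcont1 : Continuous (fun m : ℝ => 1 - m) := continuous_const.sub continuous_id
          have h0 := hcont1.tendsto 1
          norm_num at h0
          exact h0.mono_left nhdsWithin_le_nhds
        · filter_upwards [self_mem_nhdsWithin] with m hm
          simp only [Set.mem_Iio] at hm
          simp only [Set.mem_Ioi]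
          linarith
      have h2 : Tendsto (fun m : ℝ => (1 - m)⁻¹) (𝓝[<] (1:ℝ)) atTop :=
        tendsto_inv_nhdsGT_zero.comp h1
      have h3 : Tendsto (fun m : ℝ => N * κ ^ 2 * (1 - m)⁻¹) (𝓝[<] (1:ℝ)) atTop :=
        h2.const_mul_atTop (by positivity)
      have h4 : Tendsto (fun m : ℝ => N * (Dk ^ 2 / Ck) - N * κ ^ 2 * (1 - m)⁻¹)
          (𝓝[<] (1:ℝ)) atBot := by
        simp only [sub_eq_add_neg]
        exact tendsto_atBot_add_const_left _ _ (tendsto_neg_atTop_atBot.comp h3)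
      apply tendsto_atBot_mono' _ _ h4 |>.congr' hev.symm
      filter_upwards [self_mem_nhdsWithin,
        Ioo_mem_nhdsLT_of_mem (by constructor <;> norm_num : (1:ℝ) ∈ Set.Ioc (0:ℝ) 1)]
        with m hm hmIoo
      simp only [Set.mem_Iio] at hm
      have hm0 : 0 < m := hmIoo.1
      have h1m : (0:ℝ) < 1 - m := by linarith
      have hs := hsge m hm
      have hb : N * κ ^ 2 * (1 - m)⁻¹ ≤
          N * κ ^ 2 * (Real.sqrt (Ck ^ 2 + 4 * C * M * Dk ^ 2 * σa⁻¹ ^ 2 * (1 - m) ^ 2) + Ck) /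
            (2 * Ck * (1 - m)) := by
        rw [le_div_iff₀ (by positivity)]
        have e : N * κ ^ 2 * (1 - m)⁻¹ * (2 * Ck * (1 - m)) = 2 * Ck * (N * κ ^ 2) := by
          field_simp
        rw [e]
        nlinarith [mul_pos hN (pow_pos hκ 2)]
      have hle1 : N * (Dk ^ 2 / Ck) * (1 - m) ≤ N * (Dk ^ 2 / Ck) := by
        have hpos : 0 < N * (Dk ^ 2 / Ck) := by positivity
        nlinarith [mul_nonneg hpos.le hm0.le]
      linarith
    -- unique fixed point
    refine ⟨hF0, hanti, hcont, htend, ?_⟩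
    -- find m0 close to 1 with F m0 < 0
    have hev1 : ∀ᶠ m in 𝓝[<] (1:ℝ), F m < 0 := htend.eventually (eventually_lt_atBot 0)
    have hev2 : ∀ᶠ m in 𝓝[<] (1:ℝ), m ∈ Set.Ioo (0:ℝ) 1 :=
      Ioo_mem_nhdsLT_of_mem (by constructor <;> norm_num)
    obtain ⟨m0, hm0F, hm0mem⟩ := (hev1.and hev2).exists
    set φ : ℝ → ℝ := fun m => F m - m with hφ
    have hφc : ContinuousOn φ (Set.Icc 0 m0) := by
      apply ContinuousOn.sub
      · exact hcont.mono (fun x hx => ⟨hx.1, lt_of_le_of_lt hx.2 hm0mem.2⟩)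
      · exact continuousOn_id
    have hφ0 : 0 < φ 0 := by simp only [hφ]; simpa using hF0
    have hφm0 : φ m0 < 0 := by simp only [hφ]; linarith [hm0mem.1]
    have hsub := intermediate_value_Ioo' (le_of_lt hm0mem.1) hφc
    have h0mem : (0:ℝ) ∈ Set.Ioo (φ m0) (φ 0) := ⟨hφm0, hφ0⟩
    obtain ⟨mstar, hmstar_mem, hmstar_eq⟩ := hsub h0mem
    have hmstar1 : mstar < 1 := lt_trans hmstar_mem.2 hm0mem.2
    have hmstarIoo : mstar ∈ Set.Ioo (0:ℝ) 1 := ⟨hmstar_mem.1, hmstar1⟩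
    have hfix : F mstar = mstar := by
      have : F mstar - mstar = 0 := hmstar_eq
      linarith
    refine ⟨mstar, ⟨hmstarIoo, hfix⟩, ?_⟩
    intro y ⟨hyIoo, hyfix⟩
    by_contra hne
    have hyIco : y ∈ Set.Ico (0:ℝ) 1 := ⟨hyIoo.1.le, hyIoo.2⟩
    have hmstarIco : mstar ∈ Set.Ico (0:ℝ) 1 := ⟨hmstarIoo.1.le, hmstarIoo.2⟩
    rcases lt_or_gt_of_ne hne with h | h
    · have := hanti hyIco hmstarIco h
      rw [hyfix, hfix] at this
      linarith
    · have := hanti hmstarIco hyIco h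
      rw [hyfix, hfix] at this
      linarith
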